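/- arXiv:2501.12626 — 2 statements merged into one kernel-verified Lean document; each statement's English description precedes it below -/
import Mathlib

section
/- Let Q = Qᵀ, S, R = Rᵀ > 0 with Q + SR⁻¹Sᵀ ⪰ 0. Then for a given v₁, the set of all v₂ satisfying v₁ᵀQv₁ + 2v₁ᵀSv₂ − v₂ᵀRv₂ ≥ 0 is exactly { R^{-1/2}U(Q + SR⁻¹Sᵀ)^{1/2}v₁ + R⁻¹Sᵀv₁ : U ∈ ℝ^{m×m}, UᵀU ⪯ I }, where the square roots are the positive semidefinite matrix square roots. -/
open Matrix

open scoped ComplexOrder in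
/-- The positive semidefinite square root of a positive semidefinite matrix
(the definition `Matrix.PosSemidef.sqrt` of the older Mathlib, removed since). -/
noncomputable def Matrix.PosSemidef.sqrt {n 𝕜 : Type*} [Fintype n] [DecidableEq n] [RCLike 𝕜]
    {A : Matrix n n 𝕜} (hA : A.PosSemidef) : Matrix n n 𝕜 :=
  (hA.1.eigenvectorUnitary : Matrix n n 𝕜) *
    diagonal ((fun x : ℝ => (x : 𝕜)) ∘ (√·) ∘ hA.1.eigenvalues) *
    (star hA.1.eigenvectorUnitary : Matrix n n 𝕜)

lemma Matrix.PosSemidef.sqrt_mul_self {k : ℕ} {A : Matrix (Fin k) (Fin k) ℝ}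
    (hA : A.PosSemidef) : hA.sqrt * hA.sqrt = A := by
  have hu := Unitary.coe_star_mul_self hA.1.eigenvectorUnitary
  have hs := hA.1.spectral_theorem
  rw [Unitary.conjStarAlgAut_apply] at hs
  have hd : diagonal ((fun x : ℝ => (RCLike.ofReal x : ℝ)) ∘ (√·) ∘ hA.1.eigenvalues) *
      diagonal ((fun x : ℝ => (RCLike.ofReal x : ℝ)) ∘ (√·) ∘ hA.1.eigenvalues) =
      diagonal (RCLike.ofReal ∘ hA.1.eigenvalues) := by
    rw [diagonal_mul_diagonal]
    congr 1
    funext i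
    simp [Real.mul_self_sqrt (hA.eigenvalues_nonneg i)]
  conv_rhs => rw [hs]
  unfold Matrix.PosSemidef.sqrt
  rw [← hd]
  calc _ = (hA.1.eigenvectorUnitary : Matrix (Fin k) (Fin k) ℝ) *
        diagonal ((fun x : ℝ => (RCLike.ofReal x : ℝ)) ∘ (√·) ∘ hA.1.eigenvalues) *
        (star (hA.1.eigenvectorUnitary : Matrix (Fin k) (Fin k) ℝ) *
          (hA.1.eigenvectorUnitary : Matrix (Fin k) (Fin k) ℝ)) *
        diagonal ((fun x : ℝ => (RCLike.ofReal x : ℝ)) ∘ (√·) ∘ hA.1.eigenvalues) *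
        star (hA.1.eigenvectorUnitary : Matrix (Fin k) (Fin k) ℝ) := by
          simp only [Matrix.mul_assoc]
    _ = _ := by rw [hu, Matrix.mul_one]; simp only [Matrix.mul_assoc]

lemma Matrix.PosSemidef.posSemidef_sqrt {k : ℕ} {A : Matrix (Fin k) (Fin k) ℝ}
    (hA : A.PosSemidef) : hA.sqrt.PosSemidef := by
  unfold Matrix.PosSemidef.sqrt
  rw [star_eq_conjTranspose]
  apply Matrix.PosSemidef.mul_mul_conjTranspose_same
  apply Matrix.PosSemidef.diagonal
  intro i
  simp [Real.sqrt_nonneg]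


private lemma dp_aux {k l p : ℕ} (A : Matrix (Fin k) (Fin l) ℝ) (B : Matrix (Fin k) (Fin p) ℝ)
    (x : Fin l → ℝ) (y : Fin p → ℝ) :
    (A *ᵥ x) ⬝ᵥ (B *ᵥ y) = x ⬝ᵥ ((Aᵀ * B) *ᵥ y) := by
  rw [dotProduct_mulVec, dotProduct_mulVec, ← vecMul_vecMul, vecMul_transpose]

private lemma dp_aux2 {k l : ℕ} (A : Matrix (Fin k) (Fin l) ℝ) (x : Fin l → ℝ) :
    x ⬝ᵥ ((Aᵀ * A) *ᵥ x) = (A *ᵥ x) ⬝ᵥ (A *ᵥ x) := (dp_aux A A x x).symm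

private lemma dp_self_nonneg {k : ℕ} (x : Fin k → ℝ) : 0 ≤ x ⬝ᵥ x :=
  Finset.sum_nonneg fun _ _ => mul_self_nonneg _

private lemma star_id {k : ℕ} (x : Fin k → ℝ) : star x = x := by
  funext i; simp

private lemma exists_contraction {m n : ℕ} (a : Fin m → ℝ) (b : Fin n → ℝ)
    (h : a ⬝ᵥ a ≤ b ⬝ᵥ b) :
    ∃ U : Matrix (Fin m) (Fin n) ℝ,
      ((1 : Matrix (Fin n) (Fin n) ℝ) - Uᵀ * U).PosSemidef ∧ U *ᵥ b = a := by
  by_cases hb : b = 0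
  · subst hb
    have ha : a = 0 := by
      rw [← dotProduct_self_eq_zero (v := a)]
      exact le_antisymm (by simpa using h) (dp_self_nonneg a)
    exact ⟨0, by simpa using Matrix.PosSemidef.one, by simp [ha]⟩
  · set c : ℝ := b ⬝ᵥ b with hc
    have hc0 : 0 < c := by
      rcases lt_or_eq_of_le (dp_self_nonneg b) with h' | h'
      · exact h'
      · exact absurd (dotProduct_self_eq_zero.mp h'.symm) hb
    refine ⟨c⁻¹ • vecMulVec a b, ?_, ?_⟩
    · refine Matrix.PosSemidef.of_dotProduct_mulVec_nonneg ?_ ?_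
      · have h1 : ((c⁻¹ • vecMulVec a b)ᵀ * (c⁻¹ • vecMulVec a b)).IsHermitian := by
          have := Matrix.isHermitian_conjTranspose_mul_self (c⁻¹ • vecMulVec a b)
          rwa [conjTranspose_eq_transpose_of_trivial] at this
        exact Matrix.isHermitian_one.sub h1
      · intro x
        rw [star_id]
        have hUx : (c⁻¹ • vecMulVec a b) *ᵥ x = (c⁻¹ * (b ⬝ᵥ x)) • a := by
          funext i
          simp only [mulVec, vecMulVec, dotProduct, Matrix.smul_apply, of_apply, smul_eq_mul,
            Pi.smul_apply]
          rw [mul_assoc, Finset.sum_mul, Finset.mul_sum]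
          exact Finset.sum_congr rfl fun j _ => by ring
        have key : x ⬝ᵥ (((1 : Matrix (Fin n) (Fin n) ℝ) - (c⁻¹ • vecMulVec a b)ᵀ *
              (c⁻¹ • vecMulVec a b)) *ᵥ x)
            = x ⬝ᵥ x - ((c⁻¹ • vecMulVec a b) *ᵥ x) ⬝ᵥ ((c⁻¹ • vecMulVec a b) *ᵥ x) := by
          rw [sub_mulVec, dotProduct_sub, one_mulVec, dp_aux2]
        rw [key, hUx]
        have hcs : (b ⬝ᵥ x) ^ 2 ≤ c * (x ⬝ᵥ x) := by
          have := Finset.sum_mul_sq_le_sq_mul_sq Finset.univ b x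
          simpa [dotProduct, pow_two, hc] using this
        have haa : a ⬝ᵥ a ≤ c := h
        have expand : ((c⁻¹ * (b ⬝ᵥ x)) • a) ⬝ᵥ ((c⁻¹ * (b ⬝ᵥ x)) • a)
            = (c⁻¹ * (b ⬝ᵥ x)) ^ 2 * (a ⬝ᵥ a) := by
          rw [smul_dotProduct, dotProduct_smul, smul_eq_mul, smul_eq_mul]; ring
        rw [expand]
        have h1 : (c⁻¹ * (b ⬝ᵥ x)) ^ 2 * (a ⬝ᵥ a) ≤ (c⁻¹ * (b ⬝ᵥ x)) ^ 2 * c :=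
          mul_le_mul_of_nonneg_left haa (sq_nonneg _)
        have h2 : (c⁻¹ * (b ⬝ᵥ x)) ^ 2 * c = (b ⬝ᵥ x) ^ 2 / c := by
          field_simp
        have h3 : (b ⬝ᵥ x) ^ 2 / c ≤ x ⬝ᵥ x := by
          rw [div_le_iff₀ hc0]
          calc (b ⬝ᵥ x) ^ 2 ≤ c * (x ⬝ᵥ x) := hcs
          _ = (x ⬝ᵥ x) * c := by ring
        linarith
    · funext i
      simp only [mulVec, vecMulVec, dotProduct, Matrix.smul_apply, of_apply, smul_eq_mul,
        Pi.smul_apply]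
      have : ∑ j, c⁻¹ * (a i * b j) * b j = c⁻¹ * a i * (b ⬝ᵥ b) := by
        rw [dotProduct, Finset.mul_sum]
        exact Finset.sum_congr rfl fun j _ => by ring
      rw [this, ← hc]
      field_simp


/-- With `Q = Qᵀ`, `R = Rᵀ > 0`, and `Q + SR⁻¹Sᵀ ⪰ 0`, for a given `v₁`
the solution set of `v₁ᵀQv₁ + 2v₁ᵀSv₂ − v₂ᵀRv₂ ≥ 0` is exactly
`{ R^{-1/2} U (Q + SR⁻¹Sᵀ)^{1/2} v₁ + R⁻¹Sᵀv₁ : UᵀU ⪯ I }`.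
(The contraction `U` maps `ℝⁿ` to `ℝᵐ`, so it is typed `m × n` with `UᵀU ⪯ Iₙ`.) -/
theorem quadratic_inequality_solution_set
    (n m : ℕ) (Q : Matrix (Fin n) (Fin n) ℝ) (S : Matrix (Fin n) (Fin m) ℝ)
    (R : Matrix (Fin m) (Fin m) ℝ) (hQ : Q.IsSymm) (hR : R.PosDef)
    (hQS : (Q + S * R⁻¹ * Sᵀ).PosSemidef) (v1 : Fin n → ℝ) :
    {v2 : Fin m → ℝ |
        0 ≤ v1 ⬝ᵥ (Q *ᵥ v1) + 2 * (v1 ⬝ᵥ (S *ᵥ v2)) - v2 ⬝ᵥ (R *ᵥ v2)} =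
      {v2 : Fin m → ℝ | ∃ U : Matrix (Fin m) (Fin n) ℝ,
        ((1 : Matrix (Fin n) (Fin n) ℝ) - Uᵀ * U).PosSemidef ∧
        v2 = (hR.posSemidef.sqrt)⁻¹ *ᵥ (U *ᵥ (hQS.sqrt *ᵥ v1)) + R⁻¹ *ᵥ (Sᵀ *ᵥ v1)} := by
  set T := hR.posSemidef.sqrt with hTdef
  set M := hQS.sqrt with hMdef
  have hTT : T * T = R := hR.posSemidef.sqrt_mul_self
  have hMM : M * M = Q + S * R⁻¹ * Sᵀ := hQS.sqrt_mul_self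
  have hTsymm : Tᵀ = T := by
    have := hR.posSemidef.posSemidef_sqrt.1
    rwa [Matrix.IsHermitian, conjTranspose_eq_transpose_of_trivial] at this
  have hMsymm : Mᵀ = M := by
    have := hQS.posSemidef_sqrt.1
    rwa [Matrix.IsHermitian, conjTranspose_eq_transpose_of_trivial] at this
  have hdet : IsUnit T.det := by
    have hdR : (0:ℝ) < R.det := hR.det_pos
    have hmul : T.det * T.det = R.det := by rw [← det_mul, hTT]
    have hTd : T.det ≠ 0 := by
      intro h0; rw [h0, mul_zero] at hmul; exact hdR.ne' hmul.symm
    exact hTd.isUnit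
  have hTiT : T⁻¹ * T = 1 := nonsing_inv_mul T hdet
  have hTTi : T * T⁻¹ = 1 := mul_nonsing_inv T hdet
  have hRinv : T⁻¹ * T⁻¹ = R⁻¹ := by rw [← hTT, Matrix.mul_inv_rev]
  have hTisymm : (T⁻¹)ᵀ = T⁻¹ := by rw [transpose_nonsing_inv, hTsymm]
  have key : ∀ v2 : Fin m → ℝ,
      v1 ⬝ᵥ (Q *ᵥ v1) + 2 * (v1 ⬝ᵥ (S *ᵥ v2)) - v2 ⬝ᵥ (R *ᵥ v2)
        = (M *ᵥ v1) ⬝ᵥ (M *ᵥ v1)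
          - (T *ᵥ v2 - T⁻¹ *ᵥ (Sᵀ *ᵥ v1)) ⬝ᵥ (T *ᵥ v2 - T⁻¹ *ᵥ (Sᵀ *ᵥ v1)) := by
    intro v2
    have e1 : (M *ᵥ v1) ⬝ᵥ (M *ᵥ v1)
        = v1 ⬝ᵥ (Q *ᵥ v1) + v1 ⬝ᵥ ((S * R⁻¹ * Sᵀ) *ᵥ v1) := by
      rw [dp_aux, hMsymm, hMM, add_mulVec, dotProduct_add]
    have e2 : (T *ᵥ v2) ⬝ᵥ (T *ᵥ v2) = v2 ⬝ᵥ (R *ᵥ v2) := by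
      rw [dp_aux, hTsymm, hTT]
    have e3 : (T *ᵥ v2) ⬝ᵥ (T⁻¹ *ᵥ (Sᵀ *ᵥ v1)) = v1 ⬝ᵥ (S *ᵥ v2) := by
      rw [dp_aux, hTsymm, hTTi, one_mulVec]
      rw [dotProduct_mulVec, vecMul_transpose, dotProduct_comm]
    have e5 : (T⁻¹ *ᵥ (Sᵀ *ᵥ v1)) ⬝ᵥ (T⁻¹ *ᵥ (Sᵀ *ᵥ v1))
        = v1 ⬝ᵥ ((S * R⁻¹ * Sᵀ) *ᵥ v1) := by
      rw [dp_aux, hTisymm, hRinv, dp_aux, transpose_transpose, mulVec_mulVec]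
    rw [dotProduct_sub, sub_dotProduct, sub_dotProduct,
      dotProduct_comm (T⁻¹ *ᵥ (Sᵀ *ᵥ v1)) (T *ᵥ v2), e1, e2, e3, e5]
    ring
  ext v2
  simp only [Set.mem_setOf_eq]
  constructor
  · intro h
    rw [key v2] at h
    set w : Fin m → ℝ := T *ᵥ v2 - T⁻¹ *ᵥ (Sᵀ *ᵥ v1) with hw
    obtain ⟨U, hU, hUb⟩ := exists_contraction w (M *ᵥ v1) (by linarith)
    refine ⟨U, hU, ?_⟩
    rw [hUb, hw, mulVec_sub, mulVec_mulVec, mulVec_mulVec, hTiT, hRinv, one_mulVec]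
    funext i; simp
  · rintro ⟨U, hU, rfl⟩
    have h1 : T *ᵥ (T⁻¹ *ᵥ (U *ᵥ (M *ᵥ v1))) = U *ᵥ (M *ᵥ v1) := by
      rw [mulVec_mulVec, hTTi, one_mulVec]
    have h2 : T *ᵥ (R⁻¹ *ᵥ (Sᵀ *ᵥ v1)) = T⁻¹ *ᵥ (Sᵀ *ᵥ v1) := by
      rw [mulVec_mulVec, ← hRinv, ← Matrix.mul_assoc, hTTi, Matrix.one_mul]
    have hw : T *ᵥ (T⁻¹ *ᵥ (U *ᵥ (M *ᵥ v1)) + R⁻¹ *ᵥ (Sᵀ *ᵥ v1)) - T⁻¹ *ᵥ (Sᵀ *ᵥ v1)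
        = U *ᵥ (M *ᵥ v1) := by
      rw [mulVec_add, h1, h2]; abel
    rw [key, hw]
    have hq := hU.dotProduct_mulVec_nonneg (M *ᵥ v1)
    rw [star_id] at hq
    have hexp : (M *ᵥ v1) ⬝ᵥ (((1 : Matrix (Fin n) (Fin n) ℝ) - Uᵀ * U) *ᵥ (M *ᵥ v1))
        = (M *ᵥ v1) ⬝ᵥ (M *ᵥ v1) - (U *ᵥ (M *ᵥ v1)) ⬝ᵥ (U *ᵥ (M *ᵥ v1)) := by
      rw [sub_mulVec, dotProduct_sub, one_mulVec, dp_aux2]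
    rw [hexp] at hq
    linarith
end

section
/- Let A ∈ ℝ^{n×n}, B ∈ ℝ^{n×m}, and suppose there is an invertible S ∈ ℝ^{n×n} with S⁻¹AS = [[A₁₁, A₁₂],[0, A₂₂]] and S⁻¹B = [B₁; 0], where the pair (A₁₁, B₁) is controllable. Then there exists K ∈ ℝ^{m×n} such that all eigenvalues of A + BK lie strictly inside the unit disk if and only if all eigenvalues of A₂₂ lie strictly inside the unit disk. -/
open Matrix

/-- The controllability matrix `[B, AB, …, A^{r−1}B]` of a pair `(A, B)`. -/
noncomputable def ctrbMatrix (r m : ℕ) (A : Matrix (Fin r) (Fin r) ℝ)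
    (B : Matrix (Fin r) (Fin m) ℝ) : Matrix (Fin r) (Fin r × Fin m) ℝ :=
  Matrix.of fun i jp => (A ^ (jp.1 : ℕ) * B) i jp.2

section SpecHelpers

variable {n : Type*} [Fintype n] [DecidableEq n]

lemma spec_nilpotent (M : Matrix n n ℂ) (hM : IsNilpotent M) {μ : ℂ}
    (h : μ ∈ spectrum ℂ M) : μ = 0 := by
  by_contra hne
  apply spectrum.mem_iff.1 h
  have h1 : IsNilpotent (μ⁻¹ • M) := hM.smul μ⁻¹
  have h2 : IsUnit ((1 : Matrix n n ℂ) - μ⁻¹ • M) := h1.isUnit_one_sub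
  have key : algebraMap ℂ (Matrix n n ℂ) μ - M
      = algebraMap ℂ (Matrix n n ℂ) μ * ((1 : Matrix n n ℂ) - μ⁻¹ • M) := by
    rw [mul_sub, mul_one, Algebra.mul_smul_comm, ← Algebra.smul_def, smul_smul,
      inv_mul_cancel₀ hne, one_smul]
  rw [key]
  exact ((isUnit_iff_ne_zero.2 hne).map (algebraMap ℂ (Matrix n n ℂ))).mul h2

lemma spec_conj (P Q X : Matrix n n ℂ) (h1 : P * Q = 1) (h2 : Q * P = 1) :
    spectrum ℂ (P * X * Q) = spectrum ℂ X := by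
  have hP : IsUnit P := (Matrix.isUnit_iff_isUnit_det _).2 (Matrix.isUnit_det_of_right_inverse h1)
  have hQ : IsUnit Q := (Matrix.isUnit_iff_isUnit_det _).2 (Matrix.isUnit_det_of_right_inverse h2)
  ext μ
  rw [spectrum.mem_iff, spectrum.mem_iff, not_iff_not]
  have key : algebraMap ℂ (Matrix n n ℂ) μ - P * X * Q
      = P * (algebraMap ℂ (Matrix n n ℂ) μ - X) * Q := by
    rw [mul_sub, sub_mul]
    congr 1
    rw [← Algebra.commutes μ P, mul_assoc, h1, mul_one]
  rw [key]
  constructor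
  · intro h
    have : algebraMap ℂ (Matrix n n ℂ) μ - X
        = Q * (P * (algebraMap ℂ (Matrix n n ℂ) μ - X) * Q) * P := by
      rw [← mul_assoc, ← mul_assoc, h2, one_mul, mul_assoc, h2, mul_one]
    rw [this]
    exact (hQ.mul h).mul hP
  · intro h
    exact (hP.mul h).mul hQ

lemma spec_fromBlocks {p q : Type*} [Fintype p] [DecidableEq p] [Fintype q] [DecidableEq q]
    (T11 : Matrix p p ℂ) (T12 : Matrix p q ℂ) (T22 : Matrix q q ℂ) :
    spectrum ℂ (fromBlocks T11 T12 0 T22) = spectrum ℂ T11 ∪ spectrum ℂ T22 := by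
  ext μ
  have key : algebraMap ℂ (Matrix (p ⊕ q) (p ⊕ q) ℂ) μ - fromBlocks T11 T12 0 T22
      = fromBlocks (algebraMap ℂ (Matrix p p ℂ) μ - T11) (-T12) 0
          (algebraMap ℂ (Matrix q q ℂ) μ - T22) := by
    rw [Algebra.algebraMap_eq_smul_one, Algebra.algebraMap_eq_smul_one,
      Algebra.algebraMap_eq_smul_one, ← fromBlocks_one, fromBlocks_smul,
      sub_eq_add_neg, fromBlocks_neg, fromBlocks_add]
    simp [sub_eq_add_neg]
  rw [Set.mem_union, spectrum.mem_iff, spectrum.mem_iff, spectrum.mem_iff, key,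
    Matrix.isUnit_iff_isUnit_det, det_fromBlocks_zero₂₁,
    Matrix.isUnit_iff_isUnit_det, Matrix.isUnit_iff_isUnit_det]
  rw [(Commute.all _ _).isUnit_mul_iff]
  tauto

end SpecHelpers

lemma ctrb_span_top {r m : ℕ} (A : Matrix (Fin r) (Fin r) ℝ) (B : Matrix (Fin r) (Fin m) ℝ)
    (h : (ctrbMatrix r m A B).rank = r)
    (S : Submodule ℝ (Fin r → ℝ)) (hU : ∀ v, B *ᵥ v ∈ S)
    (hAS : ∀ x ∈ S, A *ᵥ x ∈ S) : S = ⊤ := by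
  have hpow : ∀ (j : ℕ) (x), x ∈ S → (A ^ j) *ᵥ x ∈ S := by
    intro j
    induction j with
    | zero => intro x hx; simpa using hx
    | succ j ih =>
      intro x hx
      rw [pow_succ, ← Matrix.mulVec_mulVec]
      exact ih _ (hAS _ hx)
  have hcols : ∀ jp : Fin r × Fin m, (fun i => ctrbMatrix r m A B i jp) ∈ S := by
    rintro ⟨j, p⟩
    have hcol : (fun i => ctrbMatrix r m A B i (j, p))
        = (A ^ (j : ℕ)) *ᵥ (B *ᵥ Pi.single p 1) := by
      rw [Matrix.mulVec_mulVec, Matrix.mulVec_single]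
      ext i
      simp [ctrbMatrix]
    rw [hcol]
    exact hpow _ _ (hU _)
  have hrange : LinearMap.range (ctrbMatrix r m A B).mulVecLin = ⊤ := by
    apply Submodule.eq_top_of_finrank_eq
    rw [Module.finrank_fin_fun]
    exact h
  rw [eq_top_iff]
  intro y _
  obtain ⟨z, hz⟩ : ∃ z, (ctrbMatrix r m A B) *ᵥ z = y := by
    have : y ∈ LinearMap.range (ctrbMatrix r m A B).mulVecLin := by
      rw [hrange]; trivial
    obtain ⟨z, hz⟩ := this
    exact ⟨z, hz⟩
  rw [← hz]
  have hsum : ctrbMatrix r m A B *ᵥ z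
      = ∑ jp : Fin r × Fin m, z jp • (fun i => ctrbMatrix r m A B i jp) := by
    ext i
    simp [Matrix.mulVec, dotProduct, Finset.sum_apply, mul_comm]
  rw [hsum]
  exact Submodule.sum_mem _ fun jp _ => Submodule.smul_mem _ _ (hcols jp)

lemma chain_exists {r m : ℕ} (A : Matrix (Fin r) (Fin r) ℝ) (B : Matrix (Fin r) (Fin m) ℝ)
    (h : (ctrbMatrix r m A B).rank = r) :
    ∀ k, k ≤ r → ∃ x : ℕ → Fin r → ℝ, x 0 = 0 ∧
      (∀ i < k, x (i+1) - A *ᵥ (x i) ∈ LinearMap.range B.mulVecLin) ∧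
      LinearIndependent ℝ (fun i : Fin k => x ((i : ℕ)+1)) := by
  intro k
  induction k with
  | zero =>
    exact fun _ => ⟨fun _ => 0, rfl, by omega, linearIndependent_empty_type⟩
  | succ k ih =>
    intro hk1
    obtain ⟨x, hx0, hxU, hxI⟩ := ih (by omega)
    set S := Submodule.span ℝ (Set.range fun i : Fin k => x ((i : ℕ)+1)) with hSdef
    have hkr : k < r := hk1
    obtain ⟨y, hyU, hyS⟩ : ∃ y, y - A *ᵥ x k ∈ LinearMap.range B.mulVecLin ∧ y ∉ S := by
      by_contra hcon
      push_neg at hcon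
      have hAxk : A *ᵥ x k ∈ S := hcon _ (by simp)
      have hBS : ∀ v, B *ᵥ v ∈ S := by
        intro v
        have h1 : (A *ᵥ x k + B *ᵥ v) ∈ S := by
          apply hcon
          rw [add_sub_cancel_left]
          exact ⟨v, rfl⟩
        simpa using S.sub_mem h1 hAxk
      have hAS : ∀ z ∈ S, A *ᵥ z ∈ S := by
        have hle : S ≤ Submodule.comap A.mulVecLin S := by
          rw [hSdef, Submodule.span_le]
          rintro _ ⟨i, rfl⟩
          simp only [SetLike.mem_coe, Submodule.mem_comap, Matrix.mulVecLin_apply]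
          rcases Nat.lt_or_ge ((i : ℕ)+1) k with hik | hik
          · -- A x_{i+1} = x_{i+2} - (x_{i+2} - A x_{i+1}) ∈ S
            have h2 : x ((i : ℕ)+2) - A *ᵥ x ((i : ℕ)+1) ∈ LinearMap.range B.mulVecLin :=
              hxU _ hik
            obtain ⟨v, hv⟩ := h2
            have h3 : x ((i : ℕ)+2) ∈ S := by
              apply Submodule.subset_span
              exact ⟨⟨(i : ℕ)+1, hik⟩, rfl⟩
            have h4 : A *ᵥ x ((i : ℕ)+1) = x ((i : ℕ)+2) - B *ᵥ v := by
              rw [Matrix.mulVecLin_apply] at hv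
              rw [hv, sub_sub_cancel]
            rw [h4]
            exact S.sub_mem h3 (hBS v)
          · have hik' : (i : ℕ) + 1 = k := by have := i.isLt; omega
            rw [hik']
            exact hAxk
        exact fun z hz => hle hz
      have hStop : S = ⊤ := ctrb_span_top A B h S hBS hAS
      have hfin : Module.finrank ℝ S = k := by
        rw [finrank_span_eq_card hxI]
        simp
      rw [hStop, finrank_top, Module.finrank_fin_fun] at hfin
      omega
    refine ⟨Function.update x (k+1) y, ?_, ?_, ?_⟩
    · rw [Function.update_of_ne (by omega)]
      exact hx0
    · intro i hi
      rcases Nat.lt_succ_iff_lt_or_eq.1 hi with hik | rfl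
      · rw [Function.update_of_ne (by omega), Function.update_of_ne (by omega)]
        exact hxU i hik
      · rw [Function.update_self, Function.update_of_ne (by omega)]
        exact hyU
    · have hfun : (fun i : Fin (k+1) => Function.update x (k+1) y ((i : ℕ)+1))
          = Fin.snoc (fun i : Fin k => x ((i : ℕ)+1)) y := by
        ext i
        refine Fin.lastCases ?_ ?_ i
        · rw [Fin.snoc_last]
          simp [Fin.val_last]
        · intro j
          rw [Fin.snoc_castSucc]
          have : ((Fin.castSucc j : Fin (k+1)) : ℕ) = (j : ℕ) := rfl
          rw [this, Function.update_of_ne (by have := j.isLt; omega)]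
      rw [hfun]
      exact linearIndependent_fin_snoc.2 ⟨hxI, hyS⟩

lemma vecMul_vecMulVec {r m : ℕ} (v b : Fin r → ℝ) (f : Fin m → ℝ) :
    v ᵥ* vecMulVec b f = (v ⬝ᵥ b) • f := by
  ext j
  simp only [vecMul, vecMulVec_apply, dotProduct, Pi.smul_apply, smul_eq_mul,
    Finset.sum_mul]
  exact Finset.sum_congr rfl fun k _ => by ring

lemma ackermann (n : ℕ) (N : Matrix (Fin (n+1)) (Fin (n+1)) ℝ) (b : Fin (n+1) → ℝ)
    (hind : LinearIndependent ℝ fun j : Fin (n+1) => (N ^ (j : ℕ)) *ᵥ b) :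
    ∃ f : Fin (n+1) → ℝ, (N + vecMulVec b f) ^ (n+1) = 0 := by
  set C : Matrix (Fin (n+1)) (Fin (n+1)) ℝ :=
    Matrix.of fun i j => ((N ^ (j : ℕ)) *ᵥ b) i with hC
  have hCt : ∀ j, Cᵀ j = (N ^ (j : ℕ)) *ᵥ b := fun j => rfl
  have hCunit : IsUnit C := by
    rw [← Matrix.mulVec_injective_iff_isUnit, Matrix.mulVec_injective_iff]
    exact hind
  have hCdet : IsUnit C.det := (Matrix.isUnit_iff_isUnit_det C).1 hCunit
  set g : Fin (n+1) → ℝ := C⁻¹ (Fin.last n) with hgdef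
  have hg : ∀ k : ℕ, (hk : k ≤ n) → g ⬝ᵥ ((N ^ k) *ᵥ b) = if k = n then 1 else 0 := by
    intro k hk
    have : g ⬝ᵥ ((N ^ k) *ᵥ b) = (C⁻¹ * C) (Fin.last n) ⟨k, by omega⟩ := by
      simp [Matrix.mul_apply, dotProduct, hC, hgdef]
    rw [this, Matrix.nonsing_inv_mul _ hCdet, Matrix.one_apply]
    simp [Fin.ext_iff, eq_comm]
  set w : ℕ → Fin (n+1) → ℝ := fun i => g ᵥ* (N ^ i) with hw
  set f : Fin (n+1) → ℝ := -(w (n+1)) with hf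
  set M := N + vecMulVec b f with hM
  have hwb : ∀ i : ℕ, i ≤ n → w i ⬝ᵥ b = if i = n then 1 else 0 := by
    intro i hi
    rw [hw]
    rw [← Matrix.dotProduct_mulVec]
    exact hg i hi
  have hstep : ∀ i : ℕ, i < n → (w i) ᵥ* M = w (i+1) := by
    intro i hi
    rw [hM, Matrix.vecMul_add, _root_.vecMul_vecMulVec, hwb i (by omega), if_neg (by omega)]
    rw [hw]
    simp [pow_succ, ← Matrix.vecMul_vecMul]
  have hlast : (w n) ᵥ* M = 0 := by
    rw [hM, Matrix.vecMul_add, _root_.vecMul_vecMulVec, hwb n le_rfl, if_pos rfl, hf]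
    have : w n ᵥ* N = w (n+1) := by rw [hw]; simp [pow_succ, ← Matrix.vecMul_vecMul]
    rw [this]; simp
  have hkill : ∀ d i : ℕ, i + d = n → (w i) ᵥ* (M ^ (d+1)) = 0 := by
    intro d
    induction d with
    | zero => intro i hi; subst hi; simpa using hlast
    | succ d ih =>
      intro i hi
      have h1 : M ^ (d+1+1) = M * M ^ (d+1) := by rw [pow_succ']
      rw [h1, ← Matrix.vecMul_vecMul, hstep i (by omega), ih (i+1) (by omega)]
  have hWrow : ∀ i : ℕ, i ≤ n → (w i) ᵥ* (M ^ (n+1)) = 0 := by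
    intro i hi
    have h1 : M ^ (n+1) = M ^ (n-i+1) * M ^ i := by rw [← pow_add]; congr 1; omega
    rw [h1, ← Matrix.vecMul_vecMul, hkill (n-i) i (by omega), Matrix.zero_vecMul]
  set W : Matrix (Fin (n+1)) (Fin (n+1)) ℝ := Matrix.of fun i j => w (i : ℕ) j with hWdef
  have hWM : W * M ^ (n+1) = 0 := by
    ext i j
    have := congr_fun (hWrow i (by omega)) j
    simpa [Matrix.mul_apply, Matrix.vecMul, dotProduct, hWdef] using this
  -- invertibility of W
  have hWC : ∀ i j : Fin (n+1), (i : ℕ) + (j : ℕ) ≤ n →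
      (W * C) i j = if (i : ℕ) + (j : ℕ) = n then 1 else 0 := by
    intro i j hij
    have h1 : (W * C) i j = w (i : ℕ) ⬝ᵥ ((N ^ (j : ℕ)) *ᵥ b) := by
      simp [Matrix.mul_apply, dotProduct, hWdef, hC]
    rw [h1, hw]
    simp only []
    rw [← Matrix.dotProduct_mulVec, Matrix.mulVec_mulVec, ← pow_add]
    exact hg _ hij
  have hDdet : (W * C).det ≠ 0 := by
    set D := (W * C).submatrix id Fin.rev with hD
    have hDtri : D.BlockTriangular OrderDual.toDual := by
      intro i j hij
      have hij' : (i : ℕ) < (j : ℕ) := hij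
      have hrev : ((Fin.rev j : Fin (n+1)) : ℕ) = n - (j : ℕ) := by
        simp [Fin.val_rev]
      have hle : (i : ℕ) + ((Fin.rev j : Fin (n+1)) : ℕ) ≤ n := by omega
      have hne : (i : ℕ) + ((Fin.rev j : Fin (n+1)) : ℕ) ≠ n := by
        have := j.isLt; omega
      rw [hD]
      simp only [Matrix.submatrix_apply, id_eq]
      rw [hWC i (Fin.rev j) hle, if_neg hne]
    have hDdiag : ∀ i : Fin (n+1), D i i = 1 := by
      intro i
      have hrev : ((Fin.rev i : Fin (n+1)) : ℕ) = n - (i : ℕ) := by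
        simp [Fin.val_rev]
      have hle : (i : ℕ) + ((Fin.rev i : Fin (n+1)) : ℕ) ≤ n := by omega
      have heq : (i : ℕ) + ((Fin.rev i : Fin (n+1)) : ℕ) = n := by
        have := i.isLt; omega
      rw [hD]
      simp only [Matrix.submatrix_apply, id_eq]
      rw [hWC i (Fin.rev i) hle, if_pos heq]
    have hDdet1 : D.det = 1 := by
      rw [Matrix.det_of_lowerTriangular D hDtri]
      simp [hDdiag]
    have hDperm : D = (W * C).submatrix id (Fin.revPerm : Equiv.Perm (Fin (n+1))) := rfl
    have := Matrix.det_permute' (Fin.revPerm : Equiv.Perm (Fin (n+1))) (W * C)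
    rw [← hDperm, hDdet1] at this
    intro hzero
    rw [hzero, mul_zero] at this
    exact one_ne_zero this
  have hWdetunit : IsUnit W.det := by
    rw [Matrix.det_mul] at hDdet
    exact isUnit_iff_ne_zero.2 (left_ne_zero_of_mul hDdet)
  refine ⟨f, ?_⟩
  calc M ^ (n+1) = W⁻¹ * (W * M ^ (n+1)) := by
        rw [← Matrix.mul_assoc, Matrix.nonsing_inv_mul _ hWdetunit, Matrix.one_mul]
    _ = 0 := by rw [hWM, Matrix.mul_zero]

lemma mul_vecMulVec {r m : ℕ} (B : Matrix (Fin r) (Fin m) ℝ) (v : Fin m → ℝ)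
    (f : Fin r → ℝ) : B * vecMulVec v f = vecMulVec (B *ᵥ v) f := by
  ext i j
  simp only [Matrix.mul_apply, vecMulVec_apply, Matrix.mulVec, dotProduct, Finset.sum_mul]
  exact Finset.sum_congr rfl fun k _ => by ring

lemma deadbeat {r m : ℕ} (A : Matrix (Fin r) (Fin r) ℝ) (B : Matrix (Fin r) (Fin m) ℝ)
    (h : (ctrbMatrix r m A B).rank = r) :
    ∃ K : Matrix (Fin m) (Fin r) ℝ, IsNilpotent (A + B * K) := by
  rcases Nat.eq_zero_or_pos r with rfl | hr
  · exact ⟨0, 1, Subsingleton.elim _ _⟩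
  obtain ⟨n, rfl⟩ : ∃ n, r = n + 1 := ⟨r - 1, by omega⟩
  obtain ⟨x, hx0, hxU, hxI⟩ := chain_exists A B h (n+1) le_rfl
  have hu : ∀ i : ℕ, ∃ v : Fin m → ℝ, i < n+1 → B *ᵥ v = x (i+1) - A *ᵥ x i := by
    intro i
    by_cases hi : i < n + 1
    · obtain ⟨v, hv⟩ := hxU i hi
      exact ⟨v, fun _ => hv⟩
    · exact ⟨0, fun h' => absurd h' hi⟩
  choose u hu using hu
  have hcard : Fintype.card (Fin (n+1)) = Module.finrank ℝ (Fin (n+1) → ℝ) := by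
    simp [Module.finrank_fin_fun]
  let bas : Module.Basis (Fin (n+1)) ℝ (Fin (n+1) → ℝ) :=
    basisOfLinearIndependentOfCardEqFinrank hxI hcard
  have hbas : ∀ i : Fin (n+1), bas i = x ((i : ℕ)+1) := fun i => by
    rw [coe_basisOfLinearIndependentOfCardEqFinrank]
  set F := (bas.constr ℝ (fun i : Fin (n+1) => u ((i : ℕ)+1)) :
    (Fin (n+1) → ℝ) →ₗ[ℝ] (Fin m → ℝ)) with hF
  set K0 := LinearMap.toMatrix' F with hK0
  set N := A + B * K0 with hN
  have hK0v : ∀ v, K0 *ᵥ v = F v := by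
    intro v
    rw [hK0, ← Matrix.toLin'_apply, Matrix.toLin'_toMatrix']
  have hNx : ∀ j : ℕ, 1 ≤ j → j ≤ n → N *ᵥ x j = x (j+1) := by
    intro j h1 h2
    have hj : j - 1 + 1 = j := by omega
    have hbj : x j = bas ⟨j-1, by omega⟩ := by
      rw [hbas]
      show x j = x (j - 1 + 1)
      rw [hj]
    have hKx : K0 *ᵥ x j = u j := by
      rw [hK0v, hbj, Module.Basis.constr_basis]
      show u (j - 1 + 1) = u j
      rw [hj]
    rw [hN, Matrix.add_mulVec, ← Matrix.mulVec_mulVec, hKx, hu j (by omega)]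
    abel
  have hpow : ∀ j : ℕ, j ≤ n → (N ^ j) *ᵥ x 1 = x (j+1) := by
    intro j
    induction j with
    | zero => intro _; simp
    | succ j ih =>
      intro hj
      rw [pow_succ', ← Matrix.mulVec_mulVec, ih (by omega), hNx (j+1) (by omega) hj]
  have hind2 : LinearIndependent ℝ (fun j : Fin (n+1) => (N ^ (j : ℕ)) *ᵥ x 1) := by
    have heq : (fun j : Fin (n+1) => (N ^ (j : ℕ)) *ᵥ x 1)
        = fun j : Fin (n+1) => x ((j : ℕ)+1) :=
      funext fun j => hpow j (by omega)
    rw [heq]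
    exact hxI
  obtain ⟨f, hf⟩ := ackermann n N (x 1) hind2
  refine ⟨K0 + vecMulVec (u 0) f, ⟨n+1, ?_⟩⟩
  have hb : B *ᵥ u 0 = x 1 := by
    have h0 := hu 0 (by omega)
    rw [hx0] at h0
    simpa using h0
  have hfinal : A + B * (K0 + vecMulVec (u 0) f) = N + vecMulVec (x 1) f := by
    rw [Matrix.mul_add, ← add_assoc, ← hN, _root_.mul_vecMulVec, hb]
  rw [hfinal]
  exact hf

/-- Proposition 2: If `S⁻¹AS = [[A₁₁, A₁₂],[0, A₂₂]]` and
`S⁻¹B = [B₁; 0]` with `(A₁₁, B₁)` controllable, then `A + BK` can be made Schur stable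
by some `K` iff all eigenvalues of `A₂₂` lie strictly inside the unit disk. -/
theorem stabilizable_iff_uncontrollable_part_stable
    (r s m : ℕ)
    (A Sm : Matrix (Fin r ⊕ Fin s) (Fin r ⊕ Fin s) ℝ)
    (B : Matrix (Fin r ⊕ Fin s) (Fin m) ℝ)
    (A11 : Matrix (Fin r) (Fin r) ℝ) (A12 : Matrix (Fin r) (Fin s) ℝ)
    (A22 : Matrix (Fin s) (Fin s) ℝ) (B1 : Matrix (Fin r) (Fin m) ℝ)
    (hS : IsUnit Sm.det)
    (hA : Sm⁻¹ * A * Sm = fromBlocks A11 A12 0 A22)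
    (hB : Sm⁻¹ * B = Matrix.of (Sum.elim (fun i j => B1 i j) (fun _ _ => (0 : ℝ))))
    (hctrb : (ctrbMatrix r m A11 B1).rank = r) :
    (∃ K : Matrix (Fin m) (Fin r ⊕ Fin s) ℝ,
        ∀ μ ∈ spectrum ℂ ((A + B * K).map (algebraMap ℝ ℂ)), ‖μ‖ < 1) ↔
      (∀ μ ∈ spectrum ℂ (A22.map (algebraMap ℝ ℂ)), ‖μ‖ < 1) := by
  set φ := (algebraMap ℝ ℂ).mapMatrix (m := Fin r ⊕ Fin s) with hφ
  -- similarity computation over ℝ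
  have hsim : ∀ K : Matrix (Fin m) (Fin r ⊕ Fin s) ℝ,
      Sm⁻¹ * (A + B * K) * Sm =
        fromBlocks (A11 + B1 * (Matrix.of fun p j => (K * Sm) p (Sum.inl j)))
          (A12 + B1 * (Matrix.of fun p j => (K * Sm) p (Sum.inr j))) 0 A22 := by
    intro K
    have e1 : Sm⁻¹ * (A + B * K) * Sm = Sm⁻¹ * A * Sm + (Sm⁻¹ * B) * (K * Sm) := by
      rw [Matrix.mul_assoc Sm⁻¹ B (K * Sm), ← Matrix.mul_assoc B K Sm]
      noncomm_ring
    rw [e1, hA, hB]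
    have e2 : (Matrix.of (Sum.elim (fun i j => B1 i j) fun _ _ => (0:ℝ)) :
        Matrix (Fin r ⊕ Fin s) (Fin m) ℝ) * (K * Sm)
        = fromBlocks (B1 * (Matrix.of fun p j => (K * Sm) p (Sum.inl j)))
            (B1 * (Matrix.of fun p j => (K * Sm) p (Sum.inr j))) 0 0 := by
      ext i j
      cases i <;> cases j <;> simp [Matrix.mul_apply, fromBlocks]
    rw [e2, fromBlocks_add]
    simp
  -- spectrum decomposition for any K
  have hspec : ∀ K : Matrix (Fin m) (Fin r ⊕ Fin s) ℝ,
      spectrum ℂ ((A + B * K).map (algebraMap ℝ ℂ)) =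
        spectrum ℂ ((A11 + B1 * (Matrix.of fun p j => (K * Sm) p (Sum.inl j))).map
            (algebraMap ℝ ℂ)) ∪
          spectrum ℂ (A22.map (algebraMap ℝ ℂ)) := by
    intro K
    set T11 := A11 + B1 * (Matrix.of fun p j => (K * Sm) p (Sum.inl j)) with hT11
    set T12 := A12 + B1 * (Matrix.of fun p j => (K * Sm) p (Sum.inr j)) with hT12
    have hABK : A + B * K = Sm * fromBlocks T11 T12 0 A22 * Sm⁻¹ := by
      rw [← hsim K, ← Matrix.mul_assoc]
      rw [← Matrix.mul_assoc, Matrix.mul_nonsing_inv _ hS, Matrix.one_mul,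
        Matrix.mul_assoc, Matrix.mul_nonsing_inv _ hS, Matrix.mul_one]
    have hmap : (A + B * K).map (algebraMap ℝ ℂ)
        = φ Sm * φ (fromBlocks T11 T12 0 A22) * φ Sm⁻¹ := by
      rw [hABK]
      show φ (Sm * fromBlocks T11 T12 0 A22 * Sm⁻¹) = _
      rw [_root_.map_mul, _root_.map_mul]
    have hPQ : φ Sm * φ Sm⁻¹ = 1 := by
      rw [← _root_.map_mul, Matrix.mul_nonsing_inv _ hS, _root_.map_one]
    have hQP : φ Sm⁻¹ * φ Sm = 1 := by
      rw [← _root_.map_mul, Matrix.nonsing_inv_mul _ hS, _root_.map_one]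
    rw [hmap, spec_conj _ _ _ hPQ hQP]
    have hblocks : φ (fromBlocks T11 T12 0 A22)
        = fromBlocks (T11.map (algebraMap ℝ ℂ)) (T12.map (algebraMap ℝ ℂ)) 0
            (A22.map (algebraMap ℝ ℂ)) := by
      rw [hφ]
      show (fromBlocks T11 T12 0 A22).map (algebraMap ℝ ℂ) = _
      rw [Matrix.fromBlocks_map]
      congr 1
    rw [hblocks, spec_fromBlocks]
  constructor
  · rintro ⟨K, hK⟩ μ hμ
    exact hK μ (by rw [hspec K]; exact Or.inr hμ)
  · intro h22
    obtain ⟨K1, hK1⟩ := deadbeat A11 B1 hctrb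
    set K := (Matrix.of (fun i => Sum.elim (K1 i) (0 : Fin s → ℝ)) :
      Matrix (Fin m) (Fin r ⊕ Fin s) ℝ) * Sm⁻¹ with hKdef
    have hKSm : K * Sm = Matrix.of (fun i => Sum.elim (K1 i) (0 : Fin s → ℝ)) := by
      rw [hKdef, Matrix.mul_assoc, Matrix.nonsing_inv_mul _ hS, Matrix.mul_one]
    have hKblock : (Matrix.of fun p j => (K * Sm) p (Sum.inl j)) = K1 := by
      ext p j
      rw [hKSm]
      rfl
    refine ⟨K, fun μ hμ => ?_⟩
    rw [hspec K, hKblock] at hμ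
    rcases hμ with h1 | h2
    · have hnil : IsNilpotent ((A11 + B1 * K1).map (algebraMap ℝ ℂ)) := by
        obtain ⟨k, hk⟩ := hK1
        refine ⟨k, ?_⟩
        have : ((A11 + B1 * K1).map (algebraMap ℝ ℂ)) ^ k
            = ((A11 + B1 * K1) ^ k).map (algebraMap ℝ ℂ) := by
          rw [← RingHom.mapMatrix_apply, ← _root_.map_pow, RingHom.mapMatrix_apply]
        rw [this, hk]
        simp [Matrix.map_zero]
      have hz := spec_nilpotent _ hnil h1
      rw [hz]
      norm_num
    · exact h22 μ h2
end
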